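/- arXiv:2601.20440 — 2 statements merged into one kernel-verified Lean document; each statement's English description precedes it below -/
import Mathlib

section
/- Let r > 0, λ > 0, γ > 0, ε > 0 be fixed and let a_ε : ℝ → ℝ be continuous with ∫_ℝ |a_ε| < ∞. A continuous function k_ε : [−r,r] → ℝ which is twice continuously differentiable on [−r,0] and on [0,r] separately (with one-sided derivatives at the endpoints and at 0) satisfies the Sturm–Liouville problem (1/2)k_ε'' + a_ε k_ε' = λ k_ε on [−r,0] and on [0,r], together with k_ε(−r) = 1, k_ε'(−r) = 0 and the transmission condition k_ε'(0+) = γ k_ε'(0−), if and only if k_ε(x) = 1 + 2λ ∫_{−r}^x ∫_{−r}^y V_ε(y,z) k_ε(z) dz dy for all x ∈ [−r,r], where V_ε(y,z) := exp(−2∫_z^y a_ε(u) du)·(γ·[yz < 0] + [yz ≥ 0]) and [·] denotes the Iverson bracket. -/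
open MeasureTheory Set Filter Topology Real

/-- The kernel `V_ε(y,z) = exp(−2∫_z^y a)·(γ·[yz<0] + [yz≥0])`. -/
noncomputable def Vker (γ : ℝ) (a : ℝ → ℝ) (y z : ℝ) : ℝ :=
  Real.exp (-2 * ∫ u in z..y, a u) *
    (γ * (if y * z < 0 then 1 else 0) + (if 0 ≤ y * z then 1 else 0))

/-! ### Auxiliary definitions -/

noncomputable def SLa (r : ℝ) (a : ℝ → ℝ) (y : ℝ) : ℝ := ∫ u in (-r)..y, a u
noncomputable def SLkt (r : ℝ) (k : ℝ → ℝ) (x : ℝ) : ℝ := k (max (-r) (min r x))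
noncomputable def SLH (r : ℝ) (a k : ℝ → ℝ) (y : ℝ) : ℝ :=
  ∫ z in (-r)..y, Real.exp (2 * SLa r a z) * SLkt r k z
noncomputable def SLG1 (r : ℝ) (a k : ℝ → ℝ) (y : ℝ) : ℝ :=
  Real.exp (-2 * SLa r a y) * SLH r a k y
noncomputable def SLG2 (r γ : ℝ) (a k : ℝ → ℝ) (y : ℝ) : ℝ :=
  Real.exp (-2 * SLa r a y) * (SLH r a k y + (γ - 1) * SLH r a k 0)

section Aux

variable {r γ : ℝ} {a k : ℝ → ℝ} {x : ℝ}

lemma la_deriv (ha : Continuous a) (hai : Integrable a) (y : ℝ) :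
    HasDerivAt (SLa r a) (a y) y :=
  intervalIntegral.integral_hasDerivAt_right hai.intervalIntegrable
    (ha.stronglyMeasurableAtFilter _ _) ha.continuousAt

lemma la_cont (ha : Continuous a) (hai : Integrable a) : Continuous (SLa r a) :=
  Differentiable.continuous fun y => (la_deriv ha hai y).differentiableAt

lemma kt_cont (hr : 0 < r) (hk : ContinuousOn k (Icc (-r) r)) : Continuous (SLkt r k) := by
  apply hk.comp_continuous (by fun_prop)
  intro x
  exact ⟨le_max_left _ _, max_le (by linarith) (min_le_left _ _)⟩

lemma kt_eq (hx : x ∈ Icc (-r) r) : SLkt r k x = k x := by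
  unfold SLkt
  rw [min_eq_right hx.2, max_eq_right hx.1]

lemma H_integrand_cont (hr : 0 < r) (ha : Continuous a) (hai : Integrable a)
    (hk : ContinuousOn k (Icc (-r) r)) :
    Continuous fun z => Real.exp (2 * SLa r a z) * SLkt r k z :=
  (Real.continuous_exp.comp (continuous_const.mul (la_cont ha hai))).mul (kt_cont hr hk)

lemma H_deriv (hr : 0 < r) (ha : Continuous a) (hai : Integrable a)
    (hk : ContinuousOn k (Icc (-r) r)) (y : ℝ) :
    HasDerivAt (SLH r a k) (Real.exp (2 * SLa r a y) * SLkt r k y) y := by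
  have hc := H_integrand_cont hr ha hai hk
  exact intervalIntegral.integral_hasDerivAt_right (hc.intervalIntegrable _ _)
    (hc.stronglyMeasurableAtFilter _ _) hc.continuousAt

lemma H_cont (hr : 0 < r) (ha : Continuous a) (hai : Integrable a)
    (hk : ContinuousOn k (Icc (-r) r)) : Continuous (SLH r a k) :=
  Differentiable.continuous fun y => (H_deriv hr ha hai hk y).differentiableAt

lemma exp_cancel (t : ℝ) : Real.exp (-2 * t) * Real.exp (2 * t) = 1 := by
  rw [← Real.exp_add]; norm_num

lemma G1_cont (hr : 0 < r) (ha : Continuous a) (hai : Integrable a)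
    (hk : ContinuousOn k (Icc (-r) r)) : Continuous (SLG1 r a k) :=
  (Real.continuous_exp.comp (continuous_const.mul (la_cont ha hai))).mul (H_cont hr ha hai hk)

lemma G2_cont (hr : 0 < r) (ha : Continuous a) (hai : Integrable a)
    (hk : ContinuousOn k (Icc (-r) r)) : Continuous (SLG2 r γ a k) :=
  (Real.continuous_exp.comp (continuous_const.mul (la_cont ha hai))).mul
    ((H_cont hr ha hai hk).add continuous_const)

lemma G1_deriv (hr : 0 < r) (ha : Continuous a) (hai : Integrable a)
    (hk : ContinuousOn k (Icc (-r) r)) (y : ℝ) :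
    HasDerivAt (SLG1 r a k) (-2 * a y * SLG1 r a k y + SLkt r k y) y := by
  have h := (((la_deriv (r := r) ha hai y).const_mul (-2)).exp).mul (H_deriv hr ha hai hk y)
  unfold SLG1
  refine h.congr_deriv (Eq.symm ?_)
  have h2 := exp_cancel (SLa r a y)
  linear_combination (-(SLkt r k y)) * h2

lemma G2_deriv (hr : 0 < r) (ha : Continuous a) (hai : Integrable a)
    (hk : ContinuousOn k (Icc (-r) r)) (y : ℝ) :
    HasDerivAt (SLG2 r γ a k) (-2 * a y * SLG2 r γ a k y + SLkt r k y) y := by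
  have h := (((la_deriv (r := r) ha hai y).const_mul (-2)).exp).mul
    ((H_deriv hr ha hai hk y).add_const ((γ - 1) * SLH r a k 0))
  unfold SLG2
  refine h.congr_deriv (Eq.symm ?_)
  have h2 := exp_cancel (SLa r a y)
  linear_combination (-(SLkt r k y)) * h2

lemma G1_contdiff (hr : 0 < r) (ha : Continuous a) (hai : Integrable a)
    (hk : ContinuousOn k (Icc (-r) r)) : ContDiff ℝ 1 (SLG1 r a k) := by
  rw [contDiff_one_iff_deriv]
  refine ⟨fun y => (G1_deriv hr ha hai hk y).differentiableAt, ?_⟩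
  have hd : deriv (SLG1 r a k) = fun y => -2 * a y * SLG1 r a k y + SLkt r k y :=
    funext fun y => (G1_deriv hr ha hai hk y).deriv
  rw [hd]
  exact ((continuous_const.mul ha).mul (G1_cont hr ha hai hk)).add (kt_cont hr hk)

lemma G2_contdiff (hr : 0 < r) (ha : Continuous a) (hai : Integrable a)
    (hk : ContinuousOn k (Icc (-r) r)) : ContDiff ℝ 1 (SLG2 r γ a k) := by
  rw [contDiff_one_iff_deriv]
  refine ⟨fun y => (G2_deriv hr ha hai hk y).differentiableAt, ?_⟩
  have hd : deriv (SLG2 r γ a k) = fun y => -2 * a y * SLG2 r γ a k y + SLkt r k y :=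
    funext fun y => (G2_deriv hr ha hai hk y).deriv
  rw [hd]
  exact ((continuous_const.mul ha).mul (G2_cont hr ha hai hk)).add (kt_cont hr hk)

lemma ae_ne_zero : ∀ᵐ z : ℝ, z ≠ 0 := by
  have h : volume ({0} : Set ℝ) = 0 := Real.volume_singleton
  rw [ae_iff]
  convert h using 2
  ext z; simp

lemma inner_eq (hr : 0 < r) (ha : Continuous a) (hai : Integrable a)
    (hk : ContinuousOn k (Icc (-r) r)) {y : ℝ} (hy : y ∈ Icc (-r) r) :
    (∫ z in (-r)..y, Vker γ a y z * k z)
      = Real.exp (-2 * SLa r a y) *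
          (SLH r a k y + (if 0 < y then (γ - 1) * SLH r a k 0 else 0)) := by
  set f1 : ℝ → ℝ := fun z => Real.exp (2 * SLa r a z) * SLkt r k z with hf1
  have hf1c : Continuous f1 := H_integrand_cont hr ha hai hk
  set w : ℝ → ℝ := fun z => γ * (if y * z < 0 then 1 else 0) + (if 0 ≤ y * z then 1 else 0)
    with hw
  have hstep : EqOn (fun z => Vker γ a y z * k z)
      (fun z => Real.exp (-2 * SLa r a y) * (f1 z * w z)) (uIcc (-r) y) := by
    intro z hz
    rw [uIcc_of_le hy.1] at hz
    have hz' : z ∈ Icc (-r) r := ⟨hz.1, le_trans hz.2 hy.2⟩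
    have hsub : (∫ u in z..y, a u) = SLa r a y - SLa r a z :=
      (intervalIntegral.integral_interval_sub_left hai.intervalIntegrable
        hai.intervalIntegrable).symm
    simp only [Vker, hf1, hw]
    rw [hsub, kt_eq hz',
      show -2 * (SLa r a y - SLa r a z) = -2 * SLa r a y + 2 * SLa r a z by ring,
      Real.exp_add]
    ring
  rw [intervalIntegral.integral_congr hstep, intervalIntegral.integral_const_mul]
  congr 1
  by_cases hy0 : 0 < y
  · have hItl : IntervalIntegrable (fun z => f1 z * w z) volume (-r) 0 := by
      rw [intervalIntegrable_iff]
      have hint : IntegrableOn (fun z => γ * f1 z) (uIoc (-r) 0) volume := by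
        have h5 : IntervalIntegrable (fun z => γ * f1 z) volume (-r) 0 :=
          (continuous_const.mul hf1c : Continuous fun z => γ * f1 z).intervalIntegrable _ _
        rwa [intervalIntegrable_iff] at h5
      refine hint.congr_fun_ae ?_
      filter_upwards [ae_restrict_of_ae ae_ne_zero, ae_restrict_mem measurableSet_uIoc]
        with z hz hzm
      rw [uIoc_of_le (by linarith : (-r : ℝ) ≤ 0)] at hzm
      have hzneg : z < 0 := lt_of_le_of_ne hzm.2 hz
      have hyz : y * z < 0 := mul_neg_of_pos_of_neg hy0 hzneg
      simp only [hw, if_pos hyz, if_neg (not_le.2 hyz)]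
      ring
    have hItr : IntervalIntegrable (fun z => f1 z * w z) volume 0 y := by
      rw [intervalIntegrable_iff]
      have hint : IntegrableOn f1 (uIoc 0 y) volume := by
        have h5 : IntervalIntegrable f1 volume 0 y := hf1c.intervalIntegrable _ _
        rwa [intervalIntegrable_iff] at h5
      refine hint.congr_fun ?_ measurableSet_uIoc
      intro z hz
      rw [uIoc_of_le hy0.le] at hz
      have hyz : (0:ℝ) ≤ y * z := mul_nonneg hy0.le (le_of_lt hz.1)
      simp only [hw, if_neg (not_lt.2 hyz), if_pos hyz]
      ring
    have hIl : (∫ z in (-r)..0, f1 z * w z) = γ * SLH r a k 0 := by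
      have hcong : ∀ᵐ z : ℝ, z ∈ uIoc (-r) 0 → f1 z * w z = γ * f1 z := by
        filter_upwards [ae_ne_zero] with z hz hzm
        rw [uIoc_of_le (by linarith : (-r : ℝ) ≤ 0)] at hzm
        have hzneg : z < 0 := lt_of_le_of_ne hzm.2 hz
        have hyz : y * z < 0 := mul_neg_of_pos_of_neg hy0 hzneg
        simp only [hw, if_pos hyz, if_neg (not_le.2 hyz)]
        ring
      rw [intervalIntegral.integral_congr_ae hcong, intervalIntegral.integral_const_mul]
      rfl
    have hIr : (∫ z in (0:ℝ)..y, f1 z * w z) = SLH r a k y - SLH r a k 0 := by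
      have hcong : EqOn (fun z => f1 z * w z) f1 (uIcc 0 y) := by
        intro z hz
        rw [uIcc_of_le hy0.le] at hz
        have hyz : (0:ℝ) ≤ y * z := mul_nonneg hy0.le hz.1
        simp only [hw, if_neg (not_lt.2 hyz), if_pos hyz]
        ring
      rw [intervalIntegral.integral_congr hcong]
      have hsub := intervalIntegral.integral_interval_sub_left (μ := volume) (a := -r)
        (b := y) (c := 0) (hf1c.intervalIntegrable _ _) (hf1c.intervalIntegrable _ _)
      rw [← hsub]
      rfl
    rw [← intervalIntegral.integral_add_adjacent_intervals hItl hItr, hIl, hIr, if_pos hy0]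
    ring
  · have hcong : EqOn (fun z => f1 z * w z) f1 (uIcc (-r) y) := by
      intro z hz
      rw [uIcc_of_le hy.1] at hz
      have hyz : (0:ℝ) ≤ y * z :=
        by nlinarith [not_lt.1 hy0, le_trans hz.2 (not_lt.1 hy0)]
      simp only [hw, if_neg (not_lt.2 hyz), if_pos hyz]
      ring
    rw [intervalIntegral.integral_congr hcong, if_neg hy0, add_zero]
    rfl

lemma red1 (hr : 0 < r) (ha : Continuous a) (hai : Integrable a)
    (hk : ContinuousOn k (Icc (-r) r)) {x : ℝ} (hx : x ∈ Icc (-r) 0) :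
    (∫ y in (-r)..x, ∫ z in (-r)..y, Vker γ a y z * k z)
      = ∫ y in (-r)..x, SLG1 r a k y := by
  apply intervalIntegral.integral_congr
  intro y hy
  rw [uIcc_of_le hx.1] at hy
  have hy' : y ∈ Icc (-r) r := ⟨hy.1, by nlinarith [hy.2, hx.2, hr.le]⟩
  show (∫ z in (-r)..y, Vker γ a y z * k z) = SLG1 r a k y
  rw [inner_eq hr ha hai hk hy', if_neg (by push_neg; exact le_trans hy.2 hx.2), add_zero]
  rfl

lemma red2 (hr : 0 < r) (ha : Continuous a) (hai : Integrable a)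
    (hk : ContinuousOn k (Icc (-r) r)) {x : ℝ} (hx : x ∈ Icc 0 r) :
    (∫ y in (-r)..x, ∫ z in (-r)..y, Vker γ a y z * k z)
      = (∫ y in (-r)..0, SLG1 r a k y) + ∫ y in (0:ℝ)..x, SLG2 r γ a k y := by
  have hrneg : (-r : ℝ) ≤ 0 := by linarith
  have hint1 : IntervalIntegrable (fun y => ∫ z in (-r)..y, Vker γ a y z * k z)
      volume (-r) 0 := by
    rw [intervalIntegrable_iff]
    have h5 : IntervalIntegrable (SLG1 r a k) volume (-r) 0 :=
      (G1_cont hr ha hai hk).intervalIntegrable _ _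
    rw [intervalIntegrable_iff] at h5
    refine h5.congr_fun ?_ measurableSet_uIoc
    intro y hy
    rw [uIoc_of_le hrneg] at hy
    have hy' : y ∈ Icc (-r) r := ⟨hy.1.le, le_trans hy.2 hr.le⟩
    show SLG1 r a k y = ∫ z in (-r)..y, Vker γ a y z * k z
    rw [inner_eq hr ha hai hk hy', if_neg (not_lt.2 hy.2), add_zero]
    rfl
  have hint2 : IntervalIntegrable (fun y => ∫ z in (-r)..y, Vker γ a y z * k z)
      volume 0 x := by
    rw [intervalIntegrable_iff]
    have h5 : IntervalIntegrable (SLG2 r γ a k) volume 0 x :=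
      (G2_cont hr ha hai hk).intervalIntegrable _ _
    rw [intervalIntegrable_iff] at h5
    refine h5.congr_fun ?_ measurableSet_uIoc
    intro y hy
    rw [uIoc_of_le hx.1] at hy
    have hy' : y ∈ Icc (-r) r := ⟨by linarith [hy.1], le_trans hy.2 hx.2⟩
    show SLG2 r γ a k y = ∫ z in (-r)..y, Vker γ a y z * k z
    rw [inner_eq hr ha hai hk hy', if_pos hy.1]
    rfl
  rw [← intervalIntegral.integral_add_adjacent_intervals hint1 hint2]
  congr 1
  · apply intervalIntegral.integral_congr
    intro y hy
    rw [uIcc_of_le hrneg] at hy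
    have hy' : y ∈ Icc (-r) r := ⟨hy.1, le_trans hy.2 hr.le⟩
    show (∫ z in (-r)..y, Vker γ a y z * k z) = SLG1 r a k y
    rw [inner_eq hr ha hai hk hy', if_neg (not_lt.2 hy.2), add_zero]
    rfl
  · apply intervalIntegral.integral_congr_ae
    apply ae_of_all
    intro y hy
    rw [uIoc_of_le hx.1] at hy
    have hy' : y ∈ Icc (-r) r := ⟨by linarith [hy.1], le_trans hy.2 hx.2⟩
    show (∫ z in (-r)..y, Vker γ a y z * k z) = SLG2 r γ a k y
    rw [inner_eq hr ha hai hk hy', if_pos hy.1]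
    rfl

lemma const_piece {c d : ℝ} (hcd : c < d) {P : ℝ → ℝ} (hPc : ContinuousOn P (Icc c d))
    (hPd : ∀ y ∈ Icc c d, HasDerivWithinAt P 0 (Icc c d) y) :
    ∀ x ∈ Icc c d, P x = P c := by
  apply constant_of_has_deriv_right_zero hPc
  intro y hy
  have h1 : HasDerivWithinAt P 0 (Icc y d) y :=
    (hPd y ⟨hy.1, hy.2.le⟩).mono (Icc_subset_Icc hy.1 le_rfl)
  rw [← Ici_inter_Iic] at h1
  exact (hasDerivWithinAt_inter (Iic_mem_nhds hy.2)).mp h1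

end Aux
/-- a continuous `k` on `[−r,r]` solves the Sturm–Liouville problem
`(1/2)k'' + a k' = λk` on `[−r,0]` and `[0,r]` with `k(−r)=1`, `k'(−r)=0` and the
transmission condition `k'(0+) = γ k'(0−)` iff it solves the integral equation
`k(x) = 1 + 2λ∫_{−r}^x∫_{−r}^y V(y,z)k(z) dz dy`. -/
theorem stmt0 (r lam γ ε : ℝ) (hr : 0 < r) (hlam : 0 < lam) (hγ : 0 < γ) (hε : 0 < ε)
    (a : ℝ → ℝ) (ha : Continuous a) (hai : Integrable a)
    (k : ℝ → ℝ) (hk : ContinuousOn k (Icc (-r) r)) :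
    (ContDiffOn ℝ 2 k (Icc (-r) 0) ∧ ContDiffOn ℝ 2 k (Icc 0 r) ∧
      (∀ x ∈ Icc (-r) 0,
        (1/2) * derivWithin (derivWithin k (Icc (-r) 0)) (Icc (-r) 0) x
          + a x * derivWithin k (Icc (-r) 0) x = lam * k x) ∧
      (∀ x ∈ Icc 0 r,
        (1/2) * derivWithin (derivWithin k (Icc 0 r)) (Icc 0 r) x
          + a x * derivWithin k (Icc 0 r) x = lam * k x) ∧
      k (-r) = 1 ∧ derivWithin k (Icc (-r) 0) (-r) = 0 ∧
      derivWithin k (Icc 0 r) 0 = γ * derivWithin k (Icc (-r) 0) 0)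
    ↔ (∀ x ∈ Icc (-r) r,
        k x = 1 + 2 * lam * ∫ y in (-r)..x, ∫ z in (-r)..y, Vker γ a y z * k z) := by
  have hr0 : (-r : ℝ) < 0 := by linarith
  have hsub1 : Icc (-r) (0:ℝ) ⊆ Icc (-r) r := Icc_subset_Icc le_rfl hr.le
  have hsub2 : Icc (0:ℝ) r ⊆ Icc (-r) r := Icc_subset_Icc hr0.le le_rfl
  have hu1 : UniqueDiffOn ℝ (Icc (-r) 0) := uniqueDiffOn_Icc hr0
  have hu2 : UniqueDiffOn ℝ (Icc 0 r) := uniqueDiffOn_Icc hr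
  have hm1 : (-r : ℝ) ∈ Icc (-r) (0:ℝ) := ⟨le_rfl, hr0.le⟩
  have h01 : (0:ℝ) ∈ Icc (-r) (0:ℝ) := ⟨hr0.le, le_rfl⟩
  have h02 : (0:ℝ) ∈ Icc (0:ℝ) r := ⟨le_rfl, hr.le⟩
  have hH0 : SLH r a k (-r) = 0 := intervalIntegral.integral_same
  constructor
  · rintro ⟨hk2a, hk2b, hode1, hode2, hkr, hkr', htr⟩
    have hk1cd : ContDiffOn ℝ 1 (derivWithin k (Icc (-r) 0)) (Icc (-r) 0) :=
      hk2a.derivWithin hu1 (by norm_num)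
    have hk2cd : ContDiffOn ℝ 1 (derivWithin k (Icc 0 r)) (Icc 0 r) :=
      hk2b.derivWithin hu2 (by norm_num)
    have hkd1 : ∀ y ∈ Icc (-r) 0,
        HasDerivWithinAt k (derivWithin k (Icc (-r) 0) y) (Icc (-r) 0) y :=
      fun y hy => ((hk2a.differentiableOn (by norm_num)) y hy).hasDerivWithinAt
    have hkd2 : ∀ y ∈ Icc 0 r,
        HasDerivWithinAt k (derivWithin k (Icc 0 r) y) (Icc 0 r) y :=
      fun y hy => ((hk2b.differentiableOn (by norm_num)) y hy).hasDerivWithinAt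
    have hkd1' : ∀ y ∈ Icc (-r) 0,
        HasDerivWithinAt (derivWithin k (Icc (-r) 0))
          (derivWithin (derivWithin k (Icc (-r) 0)) (Icc (-r) 0) y) (Icc (-r) 0) y :=
      fun y hy => ((hk1cd.differentiableOn (by norm_num)) y hy).hasDerivWithinAt
    have hkd2' : ∀ y ∈ Icc 0 r,
        HasDerivWithinAt (derivWithin k (Icc 0 r))
          (derivWithin (derivWithin k (Icc 0 r)) (Icc 0 r) y) (Icc 0 r) y :=
      fun y hy => ((hk2cd.differentiableOn (by norm_num)) y hy).hasDerivWithinAt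
    -- piece 1 : P ≡ 0
    have hP0 : ∀ y ∈ Icc (-r) 0,
        Real.exp (2 * SLa r a y) * derivWithin k (Icc (-r) 0) y - 2 * lam * SLH r a k y = 0 := by
      have hPc : ContinuousOn
          (fun y => Real.exp (2 * SLa r a y) * derivWithin k (Icc (-r) 0) y
            - 2 * lam * SLH r a k y) (Icc (-r) 0) :=
        (((Real.continuous_exp.comp (continuous_const.mul (la_cont ha hai))).continuousOn).mul
          hk1cd.continuousOn).sub (continuous_const.mul (H_cont hr ha hai hk)).continuousOn
      have hPd : ∀ y ∈ Icc (-r) 0, HasDerivWithinAt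
          (fun y => Real.exp (2 * SLa r a y) * derivWithin k (Icc (-r) 0) y
            - 2 * lam * SLH r a k y) 0 (Icc (-r) 0) y := by
        intro y hy
        have h1 := ((((la_deriv (r := r) ha hai y).const_mul 2).exp.hasDerivWithinAt).mul
          (hkd1' y hy)).sub
          (((H_deriv hr ha hai hk y).hasDerivWithinAt).const_mul (2 * lam))
        refine h1.congr_deriv (Eq.symm ?_)
        have hode := hode1 y hy
        have hkty := kt_eq (r := r) (k := k) (hsub1 hy)
        linear_combination (-2 * Real.exp (2 * SLa r a y)) * hode
          + (2 * lam * Real.exp (2 * SLa r a y)) * hkty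
      intro y hy
      rw [const_piece hr0 hPc hPd y hy, hkr', hH0]
      ring
    have hk1G : ∀ y ∈ Icc (-r) 0,
        derivWithin k (Icc (-r) 0) y = 2 * lam * SLG1 r a k y := by
      intro y hy
      have h4 : Real.exp (2 * SLa r a y) * derivWithin k (Icc (-r) 0) y
          = 2 * lam * SLH r a k y := by linarith [hP0 y hy]
      have hex := exp_cancel (SLa r a y)
      unfold SLG1
      linear_combination Real.exp (-2 * SLa r a y) * h4
        + (-(derivWithin k (Icc (-r) 0) y)) * hex
    have hks1 : ∀ x ∈ Icc (-r) 0, k x = 1 + 2 * lam * ∫ y in (-r)..x, SLG1 r a k y := by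
      intro x hx
      have hderiv : ∀ y ∈ Ioo (-r) x,
          HasDerivWithinAt k (2 * lam * SLG1 r a k y) (Ioi y) y := by
        intro y hy
        have hy1 : y ∈ Icc (-r) 0 := ⟨hy.1.le, le_trans hy.2.le hx.2⟩
        have hmem : Icc (-r) (0:ℝ) ∈ 𝓝 y := Icc_mem_nhds hy.1 (lt_of_lt_of_le hy.2 hx.2)
        have h5 := (hkd1 y hy1).hasDerivAt hmem
        rw [hk1G y hy1] at h5
        exact h5.hasDerivWithinAt
      have hFTC := intervalIntegral.integral_eq_sub_of_hasDeriv_right_of_le hx.1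
        (hk.mono (Icc_subset_Icc le_rfl (le_trans hx.2 hr.le))) hderiv
        ((continuous_const.mul (G1_cont hr ha hai hk)).intervalIntegrable _ _)
      rw [intervalIntegral.integral_const_mul, hkr] at hFTC
      linarith [hFTC]
    -- piece 2 : Q ≡ 0
    have hQ0 : ∀ y ∈ Icc 0 r,
        Real.exp (2 * SLa r a y) * derivWithin k (Icc 0 r) y
          - 2 * lam * (SLH r a k y + (γ - 1) * SLH r a k 0) = 0 := by
      have hQc : ContinuousOn
          (fun y => Real.exp (2 * SLa r a y) * derivWithin k (Icc 0 r) y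
            - 2 * lam * (SLH r a k y + (γ - 1) * SLH r a k 0)) (Icc 0 r) :=
        (((Real.continuous_exp.comp (continuous_const.mul (la_cont ha hai))).continuousOn).mul
          hk2cd.continuousOn).sub
          (continuous_const.mul ((H_cont hr ha hai hk).add continuous_const)).continuousOn
      have hQd : ∀ y ∈ Icc 0 r, HasDerivWithinAt
          (fun y => Real.exp (2 * SLa r a y) * derivWithin k (Icc 0 r) y
            - 2 * lam * (SLH r a k y + (γ - 1) * SLH r a k 0)) 0 (Icc 0 r) y := by
        intro y hy
        have h1 := ((((la_deriv (r := r) ha hai y).const_mul 2).exp.hasDerivWithinAt).mul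
          (hkd2' y hy)).sub
          ((((H_deriv hr ha hai hk y).add_const ((γ - 1) * SLH r a k 0)).hasDerivWithinAt).const_mul
            (2 * lam))
        refine h1.congr_deriv (Eq.symm ?_)
        have hode := hode2 y hy
        have hkty := kt_eq (r := r) (k := k) (hsub2 hy)
        linear_combination (-2 * Real.exp (2 * SLa r a y)) * hode
          + (2 * lam * Real.exp (2 * SLa r a y)) * hkty
      intro y hy
      rw [const_piece hr hQc hQd y hy, htr, hk1G 0 h01]
      unfold SLG1
      have hex := exp_cancel (SLa r a 0)
      linear_combination (2 * lam * γ * SLH r a k 0) * hex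
    have hk2G : ∀ y ∈ Icc 0 r,
        derivWithin k (Icc 0 r) y = 2 * lam * SLG2 r γ a k y := by
      intro y hy
      have h4 : Real.exp (2 * SLa r a y) * derivWithin k (Icc 0 r) y
          = 2 * lam * (SLH r a k y + (γ - 1) * SLH r a k 0) := by linarith [hQ0 y hy]
      have hex := exp_cancel (SLa r a y)
      unfold SLG2
      linear_combination Real.exp (-2 * SLa r a y) * h4
        + (-(derivWithin k (Icc 0 r) y)) * hex
    have hks2 : ∀ x ∈ Icc 0 r, k x = k 0 + 2 * lam * ∫ y in (0:ℝ)..x, SLG2 r γ a k y := by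
      intro x hx
      have hderiv : ∀ y ∈ Ioo 0 x,
          HasDerivWithinAt k (2 * lam * SLG2 r γ a k y) (Ioi y) y := by
        intro y hy
        have hy1 : y ∈ Icc (0:ℝ) r := ⟨hy.1.le, le_trans hy.2.le hx.2⟩
        have hmem : Icc (0:ℝ) r ∈ 𝓝 y := Icc_mem_nhds hy.1 (lt_of_lt_of_le hy.2 hx.2)
        have h5 := (hkd2 y hy1).hasDerivAt hmem
        rw [hk2G y hy1] at h5
        exact h5.hasDerivWithinAt
      have hFTC := intervalIntegral.integral_eq_sub_of_hasDeriv_right_of_le hx.1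
        (hk.mono (Icc_subset_Icc hr0.le hx.2)) hderiv
        ((continuous_const.mul (G2_cont hr ha hai hk)).intervalIntegrable _ _)
      rw [intervalIntegral.integral_const_mul] at hFTC
      linarith [hFTC]
    intro x hx
    rcases le_or_gt x 0 with hx0 | hx0
    · rw [red1 hr ha hai hk ⟨hx.1, hx0⟩]
      exact hks1 x ⟨hx.1, hx0⟩
    · rw [red2 hr ha hai hk ⟨hx0.le, hx.2⟩]
      rw [hks2 x ⟨hx0.le, hx.2⟩, hks1 0 h01]
      ring
  · intro hIE
    have hF1 : ∀ x ∈ Icc (-r) 0, k x = 1 + 2 * lam * ∫ y in (-r)..x, SLG1 r a k y := by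
      intro x hx
      rw [hIE x (hsub1 hx), red1 hr ha hai hk hx]
    have hF2 : ∀ x ∈ Icc 0 r, k x = 1 + 2 * lam *
        ((∫ y in (-r)..0, SLG1 r a k y) + ∫ y in (0:ℝ)..x, SLG2 r γ a k y) := by
      intro x hx
      rw [hIE x (hsub2 hx), red2 hr ha hai hk hx]
    have hG1p : ∀ x : ℝ, HasDerivAt
        (fun t => 1 + 2 * lam * ∫ y in (-r)..t, SLG1 r a k y) (2 * lam * SLG1 r a k x) x := by
      intro x
      have hc := G1_cont hr ha hai hk
      have h := intervalIntegral.integral_hasDerivAt_right (hc.intervalIntegrable (-r) x)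
        (hc.stronglyMeasurableAtFilter _ _) hc.continuousAt
      exact (h.const_mul (2 * lam)).const_add 1
    have hG2p : ∀ x : ℝ, HasDerivAt
        (fun t => 1 + 2 * lam * ((∫ y in (-r)..0, SLG1 r a k y)
          + ∫ y in (0:ℝ)..t, SLG2 r γ a k y)) (2 * lam * SLG2 r γ a k x) x := by
      intro x
      have hc := G2_cont (γ := γ) hr ha hai hk
      have h := intervalIntegral.integral_hasDerivAt_right (hc.intervalIntegrable 0 x)
        (hc.stronglyMeasurableAtFilter _ _) hc.continuousAt
      exact ((h.const_add _).const_mul (2 * lam)).const_add 1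
    have hd1 : ∀ x ∈ Icc (-r) 0,
        HasDerivWithinAt k (2 * lam * SLG1 r a k x) (Icc (-r) 0) x :=
      fun x hx => ((hG1p x).hasDerivWithinAt).congr (fun y hy => hF1 y hy) (hF1 x hx)
    have hd2 : ∀ x ∈ Icc 0 r,
        HasDerivWithinAt k (2 * lam * SLG2 r γ a k x) (Icc 0 r) x :=
      fun x hx => ((hG2p x).hasDerivWithinAt).congr (fun y hy => hF2 y hy) (hF2 x hx)
    have hdW1 : ∀ x ∈ Icc (-r) 0,
        derivWithin k (Icc (-r) 0) x = 2 * lam * SLG1 r a k x :=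
      fun x hx => (hd1 x hx).derivWithin (hu1 x hx)
    have hdW2 : ∀ x ∈ Icc 0 r,
        derivWithin k (Icc 0 r) x = 2 * lam * SLG2 r γ a k x :=
      fun x hx => (hd2 x hx).derivWithin (hu2 x hx)
    refine ⟨?_, ?_, ?_, ?_, ?_, ?_, ?_⟩
    · have hcd : ContDiff ℝ 2 (fun t => 1 + 2 * lam * ∫ y in (-r)..t, SLG1 r a k y) := by
        rw [show (2 : WithTop ℕ∞) = 1 + 1 by norm_num, contDiff_succ_iff_deriv]
        refine ⟨fun x => (hG1p x).differentiableAt, by simp, ?_⟩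
        have hd : deriv (fun t => 1 + 2 * lam * ∫ y in (-r)..t, SLG1 r a k y)
            = fun x => 2 * lam * SLG1 r a k x := funext fun x => (hG1p x).deriv
        rw [hd]
        exact contDiff_const.mul (G1_contdiff hr ha hai hk)
      exact hcd.contDiffOn.congr hF1
    · have hcd : ContDiff ℝ 2 (fun t => 1 + 2 * lam * ((∫ y in (-r)..0, SLG1 r a k y)
          + ∫ y in (0:ℝ)..t, SLG2 r γ a k y)) := by
        rw [show (2 : WithTop ℕ∞) = 1 + 1 by norm_num, contDiff_succ_iff_deriv]
        refine ⟨fun x => (hG2p x).differentiableAt, by simp, ?_⟩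
        have hd : deriv (fun t => 1 + 2 * lam * ((∫ y in (-r)..0, SLG1 r a k y)
            + ∫ y in (0:ℝ)..t, SLG2 r γ a k y))
            = fun x => 2 * lam * SLG2 r γ a k x := funext fun x => (hG2p x).deriv
        rw [hd]
        exact contDiff_const.mul (G2_contdiff hr ha hai hk)
      exact hcd.contDiffOn.congr hF2
    · intro x hx
      have e1 : derivWithin (derivWithin k (Icc (-r) 0)) (Icc (-r) 0) x
          = derivWithin (fun y => 2 * lam * SLG1 r a k y) (Icc (-r) 0) x :=
        derivWithin_congr (fun y hy => hdW1 y hy) (hdW1 x hx)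
      have e2 : derivWithin (fun y => 2 * lam * SLG1 r a k y) (Icc (-r) 0) x
          = 2 * lam * (-2 * a x * SLG1 r a k x + SLkt r k x) :=
        (((G1_deriv hr ha hai hk x).const_mul (2 * lam)).hasDerivWithinAt).derivWithin (hu1 x hx)
      rw [e1, e2, hdW1 x hx, kt_eq (hsub1 hx)]
      ring
    · intro x hx
      have e1 : derivWithin (derivWithin k (Icc 0 r)) (Icc 0 r) x
          = derivWithin (fun y => 2 * lam * SLG2 r γ a k y) (Icc 0 r) x :=
        derivWithin_congr (fun y hy => hdW2 y hy) (hdW2 x hx)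
      have e2 : derivWithin (fun y => 2 * lam * SLG2 r γ a k y) (Icc 0 r) x
          = 2 * lam * (-2 * a x * SLG2 r γ a k x + SLkt r k x) :=
        (((G2_deriv hr ha hai hk x).const_mul (2 * lam)).hasDerivWithinAt).derivWithin (hu2 x hx)
      rw [e1, e2, hdW2 x hx, kt_eq (hsub2 hx)]
      ring
    · rw [hF1 (-r) hm1]
      simp
    · rw [hdW1 (-r) hm1]
      unfold SLG1
      rw [hH0]
      ring
    · rw [hdW2 0 h02, hdW1 0 h01]
      unfold SLG1 SLG2
      ring
end

section
/- Let r > 0, λ > 0, γ > 0, M ≥ 0, and let a_ε : ℝ → ℝ be continuous with ∫_ℝ |a_ε(x)| dx ≤ M. Define V_ε(y,z) := exp(−2∫_z^y a_ε(u) du)·(γ·[yz < 0] + [yz ≥ 0]) and the map T_ε on C[−r,r] by (T_ε f)(x) = 1 + 2λ ∫_{−r}^x ∫_{−r}^y V_ε(y,z) f(z) dz dy. Then for every ω > 0 and all continuous f, g : [−r,r] → ℝ, ‖T_ε f − T_ε g‖_ω ≤ (2λ e^{2M} max(1,γ) / ω²) · ‖f − g‖_ω, where ‖h‖_ω := max_{x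 ∈ [−r,r]} e^{−ω(x+r)} |h(x)| is the Bielecki-type norm on C[−r,r]. -/
open MeasureTheory Set Filter Topology Real
open scoped Interval

lemma aux_exp_int (ω : ℝ) (hω : ω ≠ 0) (r c d : ℝ) :
    ∫ z in c..d, Real.exp (ω * (z + r)) =
      (Real.exp (ω * (d + r)) - Real.exp (ω * (c + r))) / ω := by
  have hD : ∀ z : ℝ, HasDerivAt (fun z => Real.exp (ω * (z + r)) / ω)
      (Real.exp (ω * (z + r))) z := by
    intro z
    have h1 : HasDerivAt (fun z : ℝ => ω * (z + r)) ω z := by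
      simpa using ((hasDerivAt_id z).add_const r).const_mul ω
    have h2 := (h1.exp).div_const ω
    simpa [mul_div_assoc, div_self hω] using h2
  rw [intervalIntegral.integral_eq_sub_of_hasDerivAt (fun z _ => hD z)
    ((Real.continuous_exp.comp (by continuity)).intervalIntegrable c d)]
  ring

lemma aux_Vker_bound (γ M : ℝ) (hγ : 0 < γ) (a : ℝ → ℝ) (hai : Integrable a)
    (haM : ∫ x, |a x| ≤ M) (y z : ℝ) :
    |Vker γ a y z| ≤ Real.exp (2 * M) * max 1 γ := by
  have hint : |∫ u in z..y, a u| ≤ M := by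
    have h1 : ‖∫ u in z..y, a u‖ = ‖∫ u in Ι z y, a u‖ :=
      intervalIntegral.norm_integral_eq_norm_integral_uIoc a
    have h2 : ‖∫ u in Ι z y, a u‖ ≤ ∫ u in Ι z y, |a u| := by
      simpa [Real.norm_eq_abs] using
        norm_integral_le_integral_norm (μ := volume.restrict (Ι z y)) a
    have h3 : ∫ u in Ι z y, |a u| ≤ ∫ u, |a u| :=
      setIntegral_le_integral hai.abs (Eventually.of_forall fun u => abs_nonneg _)
    calc |∫ u in z..y, a u| = ‖∫ u in Ι z y, a u‖ := h1
      _ ≤ ∫ u in Ι z y, |a u| := h2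
      _ ≤ M := h3.trans haM
  rw [Vker, abs_mul]
  have hE : |Real.exp (-2 * ∫ u in z..y, a u)| ≤ Real.exp (2 * M) := by
    rw [abs_of_pos (Real.exp_pos _)]
    apply Real.exp_le_exp.2
    have := abs_le.1 hint
    nlinarith [this.1, this.2]
  have hw : |γ * (if y * z < 0 then (1:ℝ) else 0) + (if 0 ≤ y * z then (1:ℝ) else 0)|
      ≤ max 1 γ := by
    rcases lt_or_ge (y * z) 0 with h | h
    · rw [if_pos h, if_neg (not_le.2 h)]
      simpa [abs_of_pos hγ] using le_max_right 1 γ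
    · rw [if_neg (not_lt.2 h), if_pos h]
      simpa using le_max_left 1 γ
  exact mul_le_mul hE hw (abs_nonneg _) (Real.exp_pos _).le

lemma aux_Vker_meas_z (γ : ℝ) (a : ℝ → ℝ) (hai : Integrable a) (y : ℝ) :
    Measurable (fun z => Vker γ a y z) := by
  have h1 : Continuous fun z => ∫ u in z..y, a u := by
    have h := (intervalIntegral.continuous_primitive
      (fun c d => hai.intervalIntegrable) y).neg
    have he : (fun z => ∫ u in z..y, a u) = fun z => -∫ u in y..z, a u :=
      funext fun z => intervalIntegral.integral_symm y z
    rw [he]; exact h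
  have h2 : Measurable fun z => Real.exp (-2 * ∫ u in z..y, a u) :=
    (Real.continuous_exp.comp ((continuous_const.mul h1))).measurable
  apply h2.mul
  apply Measurable.add
  · exact measurable_const.mul
      (Measurable.ite (measurableSet_lt (measurable_const.mul measurable_id) measurable_const)
        measurable_const measurable_const)
  · exact Measurable.ite (measurableSet_le measurable_const
      (measurable_const.mul measurable_id)) measurable_const measurable_const

lemma aux_Vker_meas (γ : ℝ) (a : ℝ → ℝ) (hai : Integrable a) :
    Measurable (fun p : ℝ × ℝ => Vker γ a p.1 p.2) := by
  have hA : Continuous fun t => ∫ u in (0:ℝ)..t, a u :=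
    intervalIntegral.continuous_primitive (fun c d => hai.intervalIntegrable) 0
  have he : (fun p : ℝ × ℝ => Vker γ a p.1 p.2) = fun p : ℝ × ℝ =>
      Real.exp (-2 * ((∫ u in (0:ℝ)..p.1, a u) - ∫ u in (0:ℝ)..p.2, a u)) *
      (γ * (if p.1 * p.2 < 0 then 1 else 0) + (if 0 ≤ p.1 * p.2 then 1 else 0)) := by
    funext p
    rw [Vker, intervalIntegral.integral_interval_sub_left hai.intervalIntegrable
      hai.intervalIntegrable]
  rw [he]
  have h2 : Measurable fun p : ℝ × ℝ =>
      Real.exp (-2 * ((∫ u in (0:ℝ)..p.1, a u) - ∫ u in (0:ℝ)..p.2, a u)) :=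
    (Real.continuous_exp.comp (continuous_const.mul
      ((hA.comp continuous_fst).sub (hA.comp continuous_snd)))).measurable
  apply h2.mul
  have hmul : Measurable fun p : ℝ × ℝ => p.1 * p.2 := measurable_fst.mul measurable_snd
  exact ((measurable_const.mul (Measurable.ite (measurableSet_lt hmul measurable_const)
    measurable_const measurable_const)).add
    (Measurable.ite (measurableSet_le measurable_const hmul)
    measurable_const measurable_const))

lemma aux_inner_int (γ : ℝ) (a : ℝ → ℝ) (hai : Integrable a)
    (C : ℝ) (hbd : ∀ y z, |Vker γ a y z| ≤ C)
    (h : ℝ → ℝ) (hc : Continuous h) (y c d : ℝ) :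
    IntervalIntegrable (fun z => Vker γ a y z * h z) volume c d := by
  rw [intervalIntegrable_iff]
  exact Integrable.bdd_mul (hc.intervalIntegrable c d).def'
    ((aux_Vker_meas_z γ a hai y).aestronglyMeasurable)
    (Eventually.of_forall fun z => by simpa [Real.norm_eq_abs] using hbd y z)

lemma aux_outer_int (γ : ℝ) (a : ℝ → ℝ) (hai : Integrable a)
    (C : ℝ) (hbd : ∀ y z, |Vker γ a y z| ≤ C)
    (h : ℝ → ℝ) (hc : Continuous h) (K : ℝ) (hK : ∀ z, |h z| ≤ K)
    (r x : ℝ) (hx : -r ≤ x) :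
    IntervalIntegrable (fun y => ∫ z in (-r)..y, Vker γ a y z * h z) volume (-r) x := by
  have hC : 0 ≤ C := (abs_nonneg _).trans (hbd 0 0)
  have hKn : 0 ≤ K := (abs_nonneg _).trans (hK 0)
  set F : ℝ × ℝ → ℝ := fun p => (Ioc (-r) p.1).indicator (fun z => Vker γ a p.1 z * h z) p.2
    with hF
  have hFmeas : StronglyMeasurable F := by
    have hset : MeasurableSet {p : ℝ × ℝ | p.2 ∈ Ioc (-r) p.1} := by
      have : {p : ℝ × ℝ | p.2 ∈ Ioc (-r) p.1}
          = {p : ℝ × ℝ | -r < p.2} ∩ {p : ℝ × ℝ | p.2 ≤ p.1} := by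
        ext p; simp [Ioc, and_comm]
      rw [this]
      exact (measurableSet_lt measurable_const measurable_snd).inter
        (measurableSet_le measurable_snd measurable_fst)
    have : Measurable F := by
      have heq : F = fun p : ℝ × ℝ =>
          if p.2 ∈ Ioc (-r) p.1 then Vker γ a p.1 p.2 * h p.2 else 0 := by
        funext p; simp [hF, indicator_apply]
      rw [heq]
      exact Measurable.ite hset
        ((aux_Vker_meas γ a hai).mul (hc.measurable.comp measurable_snd)) measurable_const
    exact this.stronglyMeasurable
  have hΦ : StronglyMeasurable fun y => ∫ z, F (y, z) :=
    hFmeas.integral_prod_right'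
  have heq : ∀ y ∈ Ioc (-r) x, (∫ z in (-r)..y, Vker γ a y z * h z) = ∫ z, F (y, z) := by
    intro y hy
    rw [intervalIntegral.integral_of_le hy.1.le]
    have : (fun z => F (y, z)) = (Ioc (-r) y).indicator (fun z => Vker γ a y z * h z) := rfl
    rw [this, integral_indicator measurableSet_Ioc]
  rw [intervalIntegrable_iff, uIoc_of_le hx]
  have hmeas : AEStronglyMeasurable (fun y => ∫ z in (-r)..y, Vker γ a y z * h z)
      (volume.restrict (Ioc (-r) x)) := by
    refine (hΦ.aestronglyMeasurable.restrict).congr ?_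
    exact (ae_restrict_iff' measurableSet_Ioc).2 (Eventually.of_forall fun y hy =>
      (heq y hy).symm)
  refine Integrable.mono' (g := fun _ => C * K * (x + r)) ?_ hmeas ?_
  · exact integrableOn_const measure_Ioc_lt_top.ne
  · refine (ae_restrict_iff' measurableSet_Ioc).2 (Eventually.of_forall fun y hy => ?_)
    have h1 : ‖∫ z in (-r)..y, Vker γ a y z * h z‖ ≤ C * K * |y - (-r)| := by
      apply intervalIntegral.norm_integral_le_of_norm_le_const
      intro z _
      rw [Real.norm_eq_abs, abs_mul]
      exact mul_le_mul (hbd y z) (hK z) (abs_nonneg _) hC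
    refine h1.trans ?_
    have : |y - (-r)| = y + r := by
      rw [abs_of_nonneg]; ring_nf; linarith [hy.1]
    rw [this]
    show C * K * (y + r) ≤ C * K * (x + r)
    have hyx := hy.2
    nlinarith [mul_nonneg (mul_nonneg hC hKn) (sub_nonneg.2 hyx)]


/-- The map `(T f)(x) = 1 + 2λ ∫_{−r}^x ∫_{−r}^y V(y,z) f(z) dz dy`. -/
noncomputable def Tmap (r lam γ : ℝ) (a : ℝ → ℝ) (f : ℝ → ℝ) (x : ℝ) : ℝ :=
  1 + 2 * lam * ∫ y in (-r)..x, ∫ z in (-r)..y, Vker γ a y z * f z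

/-- The Bielecki-type norm `‖h‖_ω = max_{x∈[−r,r]} e^{−ω(x+r)}|h(x)|` on `C[−r,r]`. -/
noncomputable def BNorm (r ω : ℝ) (h : ℝ → ℝ) : ℝ :=
  ⨆ x : Icc (-r) r, Real.exp (-ω * ((x : ℝ) + r)) * |h (x : ℝ)|

/-- the Bielecki-norm contraction estimate
`‖T_ε f − T_ε g‖_ω ≤ (2λ e^{2M} max(1,γ)/ω²)·‖f − g‖_ω`. -/
theorem stmt1 (r lam γ M ω ε : ℝ) (hr : 0 < r) (hlam : 0 < lam) (hγ : 0 < γ)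
    (hM : 0 ≤ M) (hω : 0 < ω) (hε : 0 < ε)
    (a : ℝ → ℝ) (ha : Continuous a) (hai : Integrable a)
    (haM : ∫ x, |a x| ≤ M)
    (f g : ℝ → ℝ) (hf : ContinuousOn f (Icc (-r) r)) (hg : ContinuousOn g (Icc (-r) r)) :
    BNorm r ω (fun x => Tmap r lam γ a f x - Tmap r lam γ a g x)
      ≤ (2 * lam * Real.exp (2 * M) * max 1 γ / ω ^ 2) * BNorm r ω (fun x => f x - g x) := by
  have hrr : -r ≤ r := by linarith
  set C := Real.exp (2 * M) * max 1 γ with hC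
  have hCpos : (0:ℝ) < C := mul_pos (Real.exp_pos _) (lt_max_of_lt_left one_pos)
  have hbd : ∀ y z, |Vker γ a y z| ≤ C := aux_Vker_bound γ M hγ a hai haM
  -- clamp
  set cl : ℝ → ℝ := fun z => max (-r) (min r z) with hcl
  have hclcont : Continuous cl := continuous_const.max (continuous_const.min continuous_id)
  have hclmem : ∀ z, cl z ∈ Icc (-r) r := fun z =>
    ⟨le_max_left _ _, max_le hrr (min_le_left _ _)⟩
  have hclid : ∀ z ∈ Icc (-r) r, cl z = z := by
    intro z hz
    simp only [hcl]
    rw [min_eq_right hz.2, max_eq_right hz.1]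
  set fc : ℝ → ℝ := fun z => f (cl z) with hfc'
  set gc : ℝ → ℝ := fun z => g (cl z) with hgc'
  have hfc : Continuous fc := hf.comp_continuous hclcont hclmem
  have hgc : Continuous gc := hg.comp_continuous hclcont hclmem
  have hfcx : ∀ z ∈ Icc (-r) r, fc z = f z := fun z hz => by
    simp only [hfc']; rw [hclid z hz]
  have hgcx : ∀ z ∈ Icc (-r) r, gc z = g z := fun z hz => by
    simp only [hgc']; rw [hclid z hz]
  -- global bounds for fc, gc
  obtain ⟨Kf, hKf⟩ : ∃ K, ∀ z, |fc z| ≤ K := by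
    obtain ⟨x0, _, hx0⟩ := isCompact_Icc.exists_isMaxOn
      (nonempty_Icc.2 hrr) (hf.abs)
    exact ⟨|f x0|, fun z => by rw [hfc']; exact hx0 (hclmem z)⟩
  obtain ⟨Kg, hKg⟩ : ∃ K, ∀ z, |gc z| ≤ K := by
    obtain ⟨x0, _, hx0⟩ := isCompact_Icc.exists_isMaxOn
      (nonempty_Icc.2 hrr) (hg.abs)
    exact ⟨|g x0|, fun z => by rw [hgc']; exact hx0 (hclmem z)⟩
  -- Bielecki norm of the difference
  set B := BNorm r ω (fun x => f x - g x) with hB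
  have key : BddAbove (range fun x : Icc (-r) r =>
      Real.exp (-ω * ((x : ℝ) + r)) * |f x - g x|) := by
    have heq : (fun x : Icc (-r) r => Real.exp (-ω * ((x : ℝ) + r)) * |f x - g x|)
        = fun x : Icc (-r) r => Real.exp (-ω * ((x : ℝ) + r)) * |fc x - gc x| := by
      funext x
      rw [hfcx _ x.2, hgcx _ x.2]
    rw [heq]
    exact (isCompact_range (((Real.continuous_exp.comp
      ((continuous_const.mul (continuous_subtype_val.add continuous_const))))).mul
      (((hfc.sub hgc).comp continuous_subtype_val).abs))).bddAbove
  have hB0 : 0 ≤ B := by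
    rw [hB, BNorm]
    exact Real.iSup_nonneg fun x => by positivity
  have hDle : ∀ z ∈ Icc (-r) r, |fc z - gc z| ≤ B * Real.exp (ω * (z + r)) := by
    intro z hz
    have h1 : Real.exp (-ω * (z + r)) * |f z - g z| ≤ B := by
      rw [hB, BNorm]; exact le_ciSup key ⟨z, hz⟩
    have h2 : |fc z - gc z| = Real.exp (ω * (z + r)) *
        (Real.exp (-ω * (z + r)) * |f z - g z|) := by
      rw [hfcx _ hz, hgcx _ hz, ← mul_assoc, ← Real.exp_add]
      have h0 : ω * (z + r) + -ω * (z + r) = 0 := by ring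
      rw [h0, Real.exp_zero, one_mul]
    rw [h2, mul_comm B _]
    exact mul_le_mul_of_nonneg_left h1 (Real.exp_pos _).le
  -- integrability
  have hIf : ∀ y c d, IntervalIntegrable (fun z => Vker γ a y z * fc z) volume c d :=
    fun y c d => aux_inner_int γ a hai C hbd fc hfc y c d
  have hIg : ∀ y c d, IntervalIntegrable (fun z => Vker γ a y z * gc z) volume c d :=
    fun y c d => aux_inner_int γ a hai C hbd gc hgc y c d
  have hOf : ∀ x ∈ Icc (-r) r, IntervalIntegrable
      (fun y => ∫ z in (-r)..y, Vker γ a y z * fc z) volume (-r) x :=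
    fun x hx => aux_outer_int γ a hai C hbd fc hfc Kf hKf r x hx.1
  have hOg : ∀ x ∈ Icc (-r) r, IntervalIntegrable
      (fun y => ∫ z in (-r)..y, Vker γ a y z * gc z) volume (-r) x :=
    fun x hx => aux_outer_int γ a hai C hbd gc hgc Kg hKg r x hx.1
  -- replace f, g by fc, gc in Tmap on Icc
  have hTcongr : ∀ h hc : ℝ → ℝ, (∀ z ∈ Icc (-r) r, hc z = h z) → ∀ x ∈ Icc (-r) r,
      Tmap r lam γ a h x = Tmap r lam γ a hc x := by
    intro h hc hhc x hx
    simp only [Tmap]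
    congr 1
    congr 1
    apply intervalIntegral.integral_congr
    intro y hy
    rw [uIcc_of_le hx.1] at hy
    have hy' : y ∈ Icc (-r) r := ⟨hy.1, hy.2.trans hx.2⟩
    apply intervalIntegral.integral_congr
    intro z hz
    rw [uIcc_of_le hy'.1] at hz
    have hz' : z ∈ Icc (-r) r := ⟨hz.1, hz.2.trans hy'.2⟩
    dsimp only
    rw [hhc z hz']
  -- main pointwise estimate
  have main : ∀ x ∈ Icc (-r) r,
      |Tmap r lam γ a f x - Tmap r lam γ a g x|
        ≤ 2 * lam * C * B / ω ^ 2 * Real.exp (ω * (x + r)) := by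
    intro x hx
    rw [hTcongr f fc hfcx x hx, hTcongr g gc hgcx x hx]
    have h1 : (∫ y in (-r)..x, ∫ z in (-r)..y, Vker γ a y z * fc z)
        - (∫ y in (-r)..x, ∫ z in (-r)..y, Vker γ a y z * gc z)
        = ∫ y in (-r)..x, ∫ z in (-r)..y, Vker γ a y z * (fc z - gc z) := by
      rw [← intervalIntegral.integral_sub (hOf x hx) (hOg x hx)]
      apply intervalIntegral.integral_congr
      intro y _
      dsimp only
      rw [← intervalIntegral.integral_sub (hIf y (-r) y) (hIg y (-r) y)]
      apply intervalIntegral.integral_congr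
      intro z _
      dsimp only
      ring
    have hsplit : Tmap r lam γ a fc x - Tmap r lam γ a gc x
        = 2 * lam * ∫ y in (-r)..x, ∫ z in (-r)..y, Vker γ a y z * (fc z - gc z) := by
      simp only [Tmap]
      rw [← h1]
      ring
    have hinner : ∀ y ∈ Ioc (-r) x, |∫ z in (-r)..y, Vker γ a y z * (fc z - gc z)|
        ≤ C * B / ω * Real.exp (ω * (y + r)) := by
      intro y hy
      have hb : ‖∫ z in (-r)..y, Vker γ a y z * (fc z - gc z)‖
          ≤ |∫ z in (-r)..y, C * B * Real.exp (ω * (z + r))| := by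
        apply intervalIntegral.norm_integral_le_abs_of_norm_le
        · refine (ae_restrict_iff' measurableSet_uIoc).2 (Eventually.of_forall fun z hz => ?_)
          rw [uIoc_of_le hy.1.le] at hz
          have hz' : z ∈ Icc (-r) r := ⟨hz.1.le, hz.2.trans (hy.2.trans hx.2)⟩
          rw [Real.norm_eq_abs, abs_mul]
          calc |Vker γ a y z| * |fc z - gc z| ≤ C * (B * Real.exp (ω * (z + r))) :=
              mul_le_mul (hbd y z) (hDle z hz') (abs_nonneg _) hCpos.le
            _ = C * B * Real.exp (ω * (z + r)) := by ring
        · exact ((continuous_const.mul (Real.continuous_exp.comp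
            (continuous_const.mul (continuous_id.add continuous_const)))).intervalIntegrable _ _)
      have hcomp : ∫ z in (-r)..y, C * B * Real.exp (ω * (z + r))
          = C * B * ((Real.exp (ω * (y + r)) - 1) / ω) := by
        rw [intervalIntegral.integral_const_mul, aux_exp_int ω hω.ne' r (-r) y]
        norm_num
      have he1 : 1 ≤ Real.exp (ω * (y + r)) :=
        Real.one_le_exp (by nlinarith [hy.1.le])
      rw [Real.norm_eq_abs] at hb
      calc |∫ z in (-r)..y, Vker γ a y z * (fc z - gc z)|
          ≤ |C * B * ((Real.exp (ω * (y + r)) - 1) / ω)| := by rw [← hcomp]; exact hb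
        _ = C * B * ((Real.exp (ω * (y + r)) - 1) / ω) := by
            apply abs_of_nonneg
            have : 0 ≤ Real.exp (ω * (y + r)) - 1 := by linarith
            positivity
        _ ≤ C * B / ω * Real.exp (ω * (y + r)) := by
            rw [show C * B * ((Real.exp (ω * (y + r)) - 1) / ω)
              = C * B / ω * (Real.exp (ω * (y + r)) - 1) by ring]
            have h0 : 0 ≤ C * B / ω := by positivity
            nlinarith
    have houter : |∫ y in (-r)..x, ∫ z in (-r)..y, Vker γ a y z * (fc z - gc z)|
        ≤ C * B / ω ^ 2 * Real.exp (ω * (x + r)) := by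
      have hb : ‖∫ y in (-r)..x, ∫ z in (-r)..y, Vker γ a y z * (fc z - gc z)‖
          ≤ |∫ y in (-r)..x, C * B / ω * Real.exp (ω * (y + r))| := by
        apply intervalIntegral.norm_integral_le_abs_of_norm_le
        · refine (ae_restrict_iff' measurableSet_uIoc).2 (Eventually.of_forall fun y hy => ?_)
          rw [uIoc_of_le hx.1] at hy
          rw [Real.norm_eq_abs]
          exact hinner y hy
        · exact ((continuous_const.mul (Real.continuous_exp.comp
            (continuous_const.mul (continuous_id.add continuous_const)))).intervalIntegrable _ _)
      have hcomp : ∫ y in (-r)..x, C * B / ω * Real.exp (ω * (y + r))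
          = C * B / ω * ((Real.exp (ω * (x + r)) - 1) / ω) := by
        rw [intervalIntegral.integral_const_mul, aux_exp_int ω hω.ne' r (-r) x]
        norm_num
      have he1 : 1 ≤ Real.exp (ω * (x + r)) :=
        Real.one_le_exp (by nlinarith [hx.1])
      rw [Real.norm_eq_abs] at hb
      calc |∫ y in (-r)..x, ∫ z in (-r)..y, Vker γ a y z * (fc z - gc z)|
          ≤ |C * B / ω * ((Real.exp (ω * (x + r)) - 1) / ω)| := by rw [← hcomp]; exact hb
        _ = C * B / ω * ((Real.exp (ω * (x + r)) - 1) / ω) := by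
            apply abs_of_nonneg
            have : 0 ≤ Real.exp (ω * (x + r)) - 1 := by linarith
            positivity
        _ ≤ C * B / ω ^ 2 * Real.exp (ω * (x + r)) := by
            rw [show C * B / ω * ((Real.exp (ω * (x + r)) - 1) / ω)
              = C * B / ω ^ 2 * (Real.exp (ω * (x + r)) - 1) by ring]
            have h0 : 0 ≤ C * B / ω ^ 2 := by positivity
            nlinarith
    rw [hsplit, abs_mul, abs_of_pos (by linarith : (0:ℝ) < 2 * lam)]
    calc 2 * lam * |∫ y in (-r)..x, ∫ z in (-r)..y, Vker γ a y z * (fc z - gc z)|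
        ≤ 2 * lam * (C * B / ω ^ 2 * Real.exp (ω * (x + r))) :=
          mul_le_mul_of_nonneg_left houter (by linarith)
      _ = 2 * lam * C * B / ω ^ 2 * Real.exp (ω * (x + r)) := by ring
  -- conclude
  haveI : Nonempty (Icc (-r) r) := ⟨⟨-r, left_mem_Icc.2 hrr⟩⟩
  rw [BNorm]
  apply ciSup_le
  intro x
  calc Real.exp (-ω * ((x : ℝ) + r)) *
        |Tmap r lam γ a f x - Tmap r lam γ a g x|
      ≤ Real.exp (-ω * ((x : ℝ) + r)) *
        (2 * lam * C * B / ω ^ 2 * Real.exp (ω * ((x : ℝ) + r))) :=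
        mul_le_mul_of_nonneg_left (main x x.2) (Real.exp_pos _).le
    _ = 2 * lam * C * B / ω ^ 2 *
        (Real.exp (-ω * ((x : ℝ) + r)) * Real.exp (ω * ((x : ℝ) + r))) := by ring
    _ = 2 * lam * C * B / ω ^ 2 := by
        rw [← Real.exp_add]
        have h0 : -ω * ((x : ℝ) + r) + ω * ((x : ℝ) + r) = 0 := by ring
        rw [h0, Real.exp_zero, mul_one]
    _ = (2 * lam * Real.exp (2 * M) * max 1 γ / ω ^ 2) * B := by rw [hC]; ring
end
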